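/- Let η be a nonzero real number and suppose the kernel of the Burau specialization S_η : B₃ → GL₂(ℝ) is nontrivial and not contained in the center of B₃. Then the Burau specialization S⁴_η : B₄ → GL₃(ℝ) is not injective. -/

import Mathlib

open Matrix
open scoped MatrixGroups

/-- The braid relations on `m` generators. -/
def braidRels (m : ℕ) : Set (FreeGroup (Fin m)) :=
  { r | (∃ i j : Fin m, (i : ℕ) + 1 = (j : ℕ) ∧
          r = FreeGroup.of i * FreeGroup.of j * FreeGroup.of i *
              (FreeGroup.of j * FreeGroup.of i * FreeGroup.of j)⁻¹) ∨
        (∃ i j : Fin m, (i : ℕ) + 2 ≤ (j : ℕ) ∧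
          r = FreeGroup.of i * FreeGroup.of j * (FreeGroup.of j * FreeGroup.of i)⁻¹) }

/-- The braid group on `n` strands, presented by `n-1` generators and the braid relations. -/
abbrev BraidGroup (n : ℕ) : Type := PresentedGroup (braidRels (n - 1))

/-- The braid group on three strands. -/
abbrev B3 : Type := BraidGroup 3

/-- The standard generators of `B3`. -/
def b3 (i : Fin 2) : B3 := PresentedGroup.of i

/-- `S` is the Burau specialization of `B3` at the real parameter `t₀`. -/
def IsBurau3 (t₀ : ℝ) (S : B3 →* GL (Fin 2) ℝ) : Prop :=
  (S (b3 0) : Matrix (Fin 2) (Fin 2) ℝ) = !![-t₀, 1; 0, 1] ∧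
  (S (b3 1) : Matrix (Fin 2) (Fin 2) ℝ) = !![1, 0; t₀, -t₀]

/-- The braid group on four strands. -/
abbrev B4 : Type := BraidGroup 4

/-- The standard generators of `B4`. -/
def b4 (i : Fin 3) : B4 := PresentedGroup.of i

/-- `S` is the Burau specialization of `B4` at the real parameter `t₀`. -/
def IsBurau4 (t₀ : ℝ) (S : B4 →* GL (Fin 3) ℝ) : Prop :=
  (S (b4 0) : Matrix (Fin 3) (Fin 3) ℝ) = !![-t₀, 1, 0; 0, 1, 0; 0, 0, 1] ∧
  (S (b4 1) : Matrix (Fin 3) (Fin 3) ℝ) = !![1, 0, 0; t₀, -t₀, 1; 0, 0, 1] ∧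
  (S (b4 2) : Matrix (Fin 3) (Fin 3) ℝ) = !![1, 0, 0; 0, 1, 0; 0, t₀, -t₀]


lemma presented_rel_eq_one {α : Type*} {rels : Set (FreeGroup α)} {r : FreeGroup α}
    (hr : r ∈ rels) : PresentedGroup.mk rels r = 1 :=
  (QuotientGroup.eq_one_iff r).mpr (Subgroup.subset_normalClosure hr)

lemma b3_braid : b3 0 * b3 1 * b3 0 = b3 1 * b3 0 * b3 1 := by
  have h : (FreeGroup.of (0 : Fin 2) * FreeGroup.of (1 : Fin 2) * FreeGroup.of (0 : Fin 2) *
      (FreeGroup.of (1 : Fin 2) * FreeGroup.of (0 : Fin 2) * FreeGroup.of (1 : Fin 2))⁻¹)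
      ∈ braidRels 2 := Or.inl ⟨0, 1, rfl, rfl⟩
  have h2 := presented_rel_eq_one h
  simp only [_root_.map_mul, _root_.map_inv, mul_inv_eq_one] at h2
  exact h2

lemma b4_braid01 : b4 0 * b4 1 * b4 0 = b4 1 * b4 0 * b4 1 := by
  have h : (FreeGroup.of (0 : Fin 3) * FreeGroup.of (1 : Fin 3) * FreeGroup.of (0 : Fin 3) *
      (FreeGroup.of (1 : Fin 3) * FreeGroup.of (0 : Fin 3) * FreeGroup.of (1 : Fin 3))⁻¹)
      ∈ braidRels 3 := Or.inl ⟨0, 1, rfl, rfl⟩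
  have h2 := presented_rel_eq_one h
  simp only [_root_.map_mul, _root_.map_inv, mul_inv_eq_one] at h2
  exact h2

def iotaFun : Fin 2 → B4 := ![b4 0, b4 1]

lemma iota_rels : ∀ r ∈ braidRels 2, FreeGroup.lift iotaFun r = 1 := by
  rintro r (⟨i, j, hij, rfl⟩ | ⟨i, j, hij, rfl⟩)
  · simp only [_root_.map_mul, _root_.map_inv, FreeGroup.lift_apply_of]
    fin_cases i <;> fin_cases j <;> first
    | exact absurd hij (by decide)
    | · show b4 0 * b4 1 * b4 0 * (b4 1 * b4 0 * b4 1)⁻¹ = 1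
        rw [mul_inv_eq_one]
        exact b4_braid01
  · exfalso; omega

def piFun : Fin 3 → B3 := ![b3 0, b3 1, b3 0]

lemma pi_rels : ∀ r ∈ braidRels 3, FreeGroup.lift piFun r = 1 := by
  rintro r (⟨i, j, hij, rfl⟩ | ⟨i, j, hij, rfl⟩) <;>
      simp only [_root_.map_mul, _root_.map_inv, FreeGroup.lift_apply_of] <;>
      fin_cases i <;> fin_cases j <;> first | exact absurd hij (by decide) | skip
  · show b3 0 * b3 1 * b3 0 * (b3 1 * b3 0 * b3 1)⁻¹ = 1
    rw [mul_inv_eq_one]; exact b3_braid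
  · show b3 1 * b3 0 * b3 1 * (b3 0 * b3 1 * b3 0)⁻¹ = 1
    rw [mul_inv_eq_one]; exact b3_braid.symm
  · show b3 0 * b3 0 * (b3 0 * b3 0)⁻¹ = 1
    rw [mul_inv_eq_one]

def iotaHom : B3 →* B4 := PresentedGroup.toGroup iota_rels
def piHom : B4 →* B3 := PresentedGroup.toGroup pi_rels

lemma pi_iota : piHom.comp iotaHom = MonoidHom.id B3 := by
  apply PresentedGroup.ext
  intro x
  fin_cases x <;>
    simp [iotaHom, piHom, iotaFun, piFun, b3, b4, PresentedGroup.toGroup.of]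

def emb (m : Matrix (Fin 2) (Fin 2) ℝ) : Matrix (Fin 3) (Fin 3) ℝ :=
  !![m 0 0, m 0 1, 0; m 1 0, m 1 1, 0; 0, 0, 1]

lemma emb_mul (a b : Matrix (Fin 2) (Fin 2) ℝ) : emb (a * b) = emb a * emb b := by
  ext i j
  fin_cases i <;> fin_cases j <;> (try simp [emb, Matrix.mul_apply, Fin.sum_univ_three,
    Fin.sum_univ_two, Matrix.vecHead, Matrix.vecTail]) <;> (try rfl)

lemma emb_one : emb 1 = 1 := by
  ext i j
  fin_cases i <;> fin_cases j <;> simp [emb, Matrix.one_apply, Matrix.vecHead, Matrix.vecTail]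

def embGL : GL (Fin 2) ℝ →* GL (Fin 3) ℝ where
  toFun A := ⟨emb A.val, emb A.inv,
    by rw [← emb_mul, A.val_inv, emb_one], by rw [← emb_mul, A.inv_val, emb_one]⟩
  map_one' := by
    apply Units.ext
    show emb (1 : GL (Fin 2) ℝ).val = _
    rw [Units.val_one, emb_one, Units.val_one]
  map_mul' A B := by
    apply Units.ext
    show emb ((A * B).val) = _
    rw [Units.val_mul, emb_mul]
    rfl

noncomputable def Pmat (t : ℝ) : Matrix (Fin 3) (Fin 3) ℝ :=
  !![1, 0, 1/(t^2+t+1); 0, 1, (1+t)/(t^2+t+1); 0, 0, 1]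

noncomputable def Pmatinv (t : ℝ) : Matrix (Fin 3) (Fin 3) ℝ :=
  !![1, 0, -(1/(t^2+t+1)); 0, 1, -((1+t)/(t^2+t+1)); 0, 0, 1]

lemma Pmat_mul_inv (t : ℝ) : Pmat t * Pmatinv t = 1 := by
  ext i j
  fin_cases i <;> fin_cases j <;>
    simp [Pmat, Pmatinv, Matrix.mul_apply, Fin.sum_univ_three, Matrix.one_apply,
      Matrix.vecHead, Matrix.vecTail, Function.comp]

lemma Pmat_inv_mul (t : ℝ) : Pmatinv t * Pmat t = 1 := by
  ext i j
  fin_cases i <;> fin_cases j <;>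
    simp [Pmat, Pmatinv, Matrix.mul_apply, Fin.sum_univ_three, Matrix.one_apply,
      Matrix.vecHead, Matrix.vecTail, Function.comp]

noncomputable def PGL (t : ℝ) : GL (Fin 3) ℝ :=
  ⟨Pmat t, Pmatinv t, Pmat_mul_inv t, Pmat_inv_mul t⟩


lemma quad_ne_zero (t : ℝ) : t ^ 2 + t + 1 ≠ 0 := by
  nlinarith [sq_nonneg (t + 1/2), sq_nonneg t]

theorem burau_B4_unfaithful_of_B3_kernel (η : ℝ) (hη : η ≠ 0)
    (S₃ : B3 →* GL (Fin 2) ℝ) (hS₃ : IsBurau3 η S₃)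
    (S₄ : B4 →* GL (Fin 3) ℝ) (hS₄ : IsBurau4 η S₄)
    (hker_nt : S₃.ker ≠ ⊥) (hker_nc : ¬ S₃.ker ≤ Subgroup.center B3) :
    ¬ Function.Injective S₄ := by
  obtain ⟨hS31, hS32⟩ := hS₃
  obtain ⟨hS41, hS42, _⟩ := hS₄
  have hD : η ^ 2 + η + 1 ≠ 0 := quad_ne_zero η
  set T : B3 →* GL (Fin 3) ℝ :=
    ((MulAut.conj (PGL η)).toMonoidHom).comp (embGL.comp S₃) with hT
  have key : S₄.comp iotaHom = T := by
    apply PresentedGroup.ext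
    intro x
    apply Units.ext
    fin_cases x
    · show (S₄ (iotaHom (b3 0)) : Matrix (Fin 3) (Fin 3) ℝ) = _
      have h0 : iotaHom (b3 0) = b4 0 := by
        simp [iotaHom, b3, b4, iotaFun, PresentedGroup.toGroup.of]
      rw [h0, hS41, hT]
      show _ = (PGL η * embGL (S₃ (b3 0)) * (PGL η)⁻¹ : GL (Fin 3) ℝ).val
      rw [Units.val_mul, Units.val_mul]
      have hinv : ((PGL η)⁻¹ : GL (Fin 3) ℝ).val = Pmatinv η := rfl
      have h1 : (embGL (S₃ (b3 0)) : Matrix (Fin 3) (Fin 3) ℝ) = emb !![-η, 1; 0, 1] := by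
        show emb (S₃ (b3 0)).val = _
        rw [hS31]
      rw [hinv, h1]
      show _ = Pmat η * _ * _
      ext i j
      fin_cases i <;> fin_cases j <;>
        (try simp [Pmat, Pmatinv, emb, Matrix.mul_apply, Fin.sum_univ_three, Matrix.vecHead,
          Matrix.vecTail]) <;> (try field_simp) <;> (try ring)
    · show (S₄ (iotaHom (b3 1)) : Matrix (Fin 3) (Fin 3) ℝ) = _
      have h0 : iotaHom (b3 1) = b4 1 := by
        simp [iotaHom, b3, b4, iotaFun, PresentedGroup.toGroup.of]
      rw [h0, hS42, hT]
      show _ = (PGL η * embGL (S₃ (b3 1)) * (PGL η)⁻¹ : GL (Fin 3) ℝ).val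
      rw [Units.val_mul, Units.val_mul]
      have hinv : ((PGL η)⁻¹ : GL (Fin 3) ℝ).val = Pmatinv η := rfl
      have h1 : (embGL (S₃ (b3 1)) : Matrix (Fin 3) (Fin 3) ℝ) = emb !![1, 0; η, -η] := by
        show emb (S₃ (b3 1)).val = _
        rw [hS32]
      rw [hinv, h1]
      show _ = Pmat η * _ * _
      ext i j
      fin_cases i <;> fin_cases j <;>
        (try simp [Pmat, Pmatinv, emb, Matrix.mul_apply, Fin.sum_univ_three, Matrix.vecHead,
          Matrix.vecTail]) <;> (try field_simp) <;> (try ring) <;>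
          (try field_simp [show (1 + η + η ^ 2) ≠ 0 by intro h; exact hD (by linarith)]) <;> (try ring)
  obtain ⟨k, hk, hkc⟩ := SetLike.not_le_iff_exists.mp hker_nc
  have hk1 : k ≠ 1 := fun h => hkc (h ▸ Subgroup.one_mem _)
  intro hinj
  have hk0 : S₃ k = 1 := hk
  have h4 : S₄ (iotaHom k) = 1 := by
    have hkeyk := DFunLike.congr_fun key k
    simp only [MonoidHom.comp_apply] at hkeyk
    rw [hkeyk, hT]
    simp [hk0]
  have h5 : iotaHom k = 1 := hinj (by rw [h4, _root_.map_one])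
  have h6 : k = 1 := by
    have hpi := DFunLike.congr_fun pi_iota k
    simp only [MonoidHom.comp_apply, MonoidHom.id_apply] at hpi
    rw [← hpi, h5, _root_.map_one]
  exact hk1 h6
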